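/- Let f(p) = 1 - exp(-a p) for a > 0 and p ∈ [0,1], and consider maximizing ∑_{m=1}^{M} p_r(m) f(p(m)) over p : Fin M → [0,1] with ∑_m p(m) ≤ N, where p_r(m) > 0. Then at any optimum, for any two files i, j with p*(i), p*(j) ∈ (0,1), the weighted marginal gains are equal: p_r(i) a exp(-a p*(i)) = p_r(j) a exp(-a p*(j)); consequently p*(i) - p*(j) = (1/a) ln(p_r(i)/p_r(j)), so more popular files get (weakly) larger caching probabilities. -/

import Mathlib

open Real

/-- One-sided KKT inequality obtained by moving `ε` caching probability from
file `j` to file `i`. -/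
lemma gcp_kkt_aux_le (M : ℕ) (N : ℕ) (a : ℝ) (ha : 0 < a)
    (p_r : Fin M → ℝ) (hpr : ∀ m, 0 < p_r m)
    (pstar : Fin M → ℝ) (hfeas : ∀ m, pstar m ∈ Set.Icc (0 : ℝ) 1)
    (hsum : ∑ m, pstar m ≤ (N : ℝ))
    (hopt : ∀ q : Fin M → ℝ, (∀ m, q m ∈ Set.Icc (0 : ℝ) 1) → ∑ m, q m ≤ (N : ℝ) →
      ∑ m, p_r m * (1 - Real.exp (-(a * q m)))
        ≤ ∑ m, p_r m * (1 - Real.exp (-(a * pstar m))))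
    (i j : Fin M) (hij : i ≠ j)
    (hi : pstar i ∈ Set.Ioo (0 : ℝ) 1) (hj : pstar j ∈ Set.Ioo (0 : ℝ) 1) :
    p_r i * Real.exp (-(a * pstar i)) ≤ p_r j * Real.exp (-(a * pstar j)) := by
  set A := p_r i * Real.exp (-(a * pstar i)) with hAdef
  set B := p_r j * Real.exp (-(a * pstar j)) with hBdef
  by_contra hcon
  push_neg at hcon
  have hA : 0 < A := mul_pos (hpr i) (Real.exp_pos _)
  have hB : 0 < B := mul_pos (hpr j) (Real.exp_pos _)
  have hlog : 0 < Real.log (A / B) := Real.log_pos (by rw [one_lt_div hB]; exact hcon)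
  set ε := min (min (1 - pstar i) (pstar j)) (Real.log (A / B) / (2 * a)) with hεdef
  have hε0 : 0 < ε := by
    apply lt_min (lt_min (by linarith [hi.2]) hj.1)
    positivity
  have hε1 : ε ≤ 1 - pstar i := le_trans (min_le_left _ _) (min_le_left _ _)
  have hε2 : ε ≤ pstar j := le_trans (min_le_left _ _) (min_le_right _ _)
  have hε3 : a * ε < Real.log (A / B) := by
    have h1 : ε ≤ Real.log (A / B) / (2 * a) := min_le_right _ _
    have h2 : a * ε ≤ a * (Real.log (A / B) / (2 * a)) := by
      exact mul_le_mul_of_nonneg_left h1 (le_of_lt ha)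
    have h3 : a * (Real.log (A / B) / (2 * a)) = Real.log (A / B) / 2 := by
      field_simp
    rw [h3] at h2
    linarith
  set q : Fin M → ℝ :=
    Function.update (Function.update pstar i (pstar i + ε)) j (pstar j - ε) with hqdef
  have hq_i : q i = pstar i + ε := by
    simp [hqdef, Function.update_apply, hij]
  have hq_j : q j = pstar j - ε := by
    simp [hqdef]
  have hq_other : ∀ m, m ≠ i → m ≠ j → q m = pstar m := by
    intro m hmi hmj
    simp [hqdef, Function.update_apply, hmi, hmj]
  have hqfeas : ∀ m, q m ∈ Set.Icc (0 : ℝ) 1 := by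
    intro m
    by_cases hmj : m = j
    · subst hmj
      rw [hq_j]
      constructor <;> [linarith; linarith [(hfeas m).2]]
    · by_cases hmi : m = i
      · subst hmi
        rw [hq_i]
        constructor <;> [linarith [hi.1]; linarith]
      · rw [hq_other m hmi hmj]; exact hfeas m
  have hdiffsum : ∀ (f : Fin M → ℝ), (∀ m, m ≠ i → m ≠ j → f m = 0) →
      ∑ m, f m = f i + f j := by
    intro f hf
    rw [← Finset.sum_subset (Finset.subset_univ ({i, j} : Finset (Fin M)))
      (fun x _ hx => by
        simp only [Finset.mem_insert, Finset.mem_singleton, not_or] at hx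
        exact hf x hx.1 hx.2)]
    exact Finset.sum_pair hij
  have hqsum : ∑ m, q m ≤ (N : ℝ) := by
    have h0 : ∑ m, (q m - pstar m) = (q i - pstar i) + (q j - pstar j) :=
      hdiffsum _ (fun m hmi hmj => by rw [hq_other m hmi hmj]; ring)
    rw [Finset.sum_sub_distrib] at h0
    rw [hq_i, hq_j] at h0
    have : ∑ m, q m = ∑ m, pstar m := by linarith
    linarith
  have hineq := hopt q hqfeas hqsum
  set F := fun m => p_r m * (1 - Real.exp (-(a * q m)))
      - p_r m * (1 - Real.exp (-(a * pstar m))) with hFdef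
  have hFsum : ∑ m, F m = F i + F j :=
    hdiffsum _ (fun m hmi hmj => by simp [hFdef, hq_other m hmi hmj])
  have hFle : F i + F j ≤ 0 := by
    rw [← hFsum, hFdef]
    simp only [Finset.sum_sub_distrib]
    linarith
  have hFi : F i = A * (1 - Real.exp (-(a * ε))) := by
    simp only [hFdef, hq_i, hAdef]
    rw [show -(a * (pstar i + ε)) = -(a * pstar i) + -(a * ε) by ring, Real.exp_add]
    ring
  have hFj : F j = B * (1 - Real.exp (a * ε)) := by
    simp only [hFdef, hq_j, hBdef]
    rw [show -(a * (pstar j - ε)) = -(a * pstar j) + a * ε by ring, Real.exp_add]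
    ring
  have hE1 : Real.exp (-(a * ε)) < 1 := by
    rw [Real.exp_lt_one_iff]
    nlinarith
  have hEmul : Real.exp (a * ε) * Real.exp (-(a * ε)) = 1 := by
    rw [← Real.exp_add]; simp
  -- From hFle : A (1 - E) + B (1 - e^{aε}) ≤ 0, i.e. A(1-E) ≤ B(e^{aε} - 1) = B e^{aε} (1-E)
  have hABle : A ≤ B * Real.exp (a * ε) := by
    rw [hFi, hFj] at hFle
    have h1E : 0 < 1 - Real.exp (-(a * ε)) := by linarith
    have key : A * (1 - Real.exp (-(a * ε)))
        ≤ B * Real.exp (a * ε) * (1 - Real.exp (-(a * ε))) := by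
      nlinarith [hEmul]
    exact le_of_mul_le_mul_right key h1E
  have hexp : Real.exp (a * ε) < A / B := by
    calc Real.exp (a * ε) < Real.exp (Real.log (A / B)) := Real.exp_lt_exp.mpr hε3
    _ = A / B := Real.exp_log (by positivity)
  have : B * Real.exp (a * ε) < A := by
    calc B * Real.exp (a * ε) < B * (A / B) := by
          exact mul_lt_mul_of_pos_left hexp hB
    _ = A := by field_simp
  linarith

/-- KKT equal-marginal condition for the GCP hit-probability maximization: at an
optimum, any two files with interior caching probabilities have equal weighted
marginal gains, and hence `p*(i) - p*(j) = (1/a) ln(p_r(i)/p_r(j))`. -/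
theorem gcp_kkt_equal_marginals (M : ℕ) (N : ℕ) (a : ℝ) (ha : 0 < a)
    (p_r : Fin M → ℝ) (hpr : ∀ m, 0 < p_r m)
    (pstar : Fin M → ℝ) (hfeas : ∀ m, pstar m ∈ Set.Icc (0 : ℝ) 1)
    (hsum : ∑ m, pstar m ≤ (N : ℝ))
    (hopt : ∀ q : Fin M → ℝ, (∀ m, q m ∈ Set.Icc (0 : ℝ) 1) → ∑ m, q m ≤ (N : ℝ) →
      ∑ m, p_r m * (1 - Real.exp (-(a * q m)))
        ≤ ∑ m, p_r m * (1 - Real.exp (-(a * pstar m)))) :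
    ∀ i j : Fin M, pstar i ∈ Set.Ioo (0 : ℝ) 1 → pstar j ∈ Set.Ioo (0 : ℝ) 1 →
      p_r i * a * Real.exp (-(a * pstar i)) = p_r j * a * Real.exp (-(a * pstar j)) ∧
      pstar i - pstar j = (1 / a) * Real.log (p_r i / p_r j) := by
  intro i j hi hj
  by_cases hij : i = j
  · subst hij
    refine ⟨rfl, ?_⟩
    rw [div_self (ne_of_gt (hpr i)), Real.log_one]
    ring
  · have h1 := gcp_kkt_aux_le M N a ha p_r hpr pstar hfeas hsum hopt i j hij hi hj
    have h2 := gcp_kkt_aux_le M N a ha p_r hpr pstar hfeas hsum hopt j i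
      (Ne.symm hij) hj hi
    have heq : p_r i * Real.exp (-(a * pstar i)) = p_r j * Real.exp (-(a * pstar j)) :=
      le_antisymm h1 h2
    constructor
    · rw [show p_r i * a * Real.exp (-(a * pstar i))
          = a * (p_r i * Real.exp (-(a * pstar i))) by ring, heq]; ring
    · have hlog := congrArg Real.log heq
      rw [Real.log_mul (ne_of_gt (hpr i)) (Real.exp_ne_zero _),
          Real.log_mul (ne_of_gt (hpr j)) (Real.exp_ne_zero _),
          Real.log_exp, Real.log_exp] at hlog
      rw [Real.log_div (ne_of_gt (hpr i)) (ne_of_gt (hpr j))]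
      field_simp
      linarith
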